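/- For all t > 0 and any 0 < b ≤ π and constant c > 0, ∫_0^b ∫_{c y² t}^{∞} (e^{-x}/x) dx dy ≤ C·(1 + c^{-2/3})·t^{-1/2} for some absolute constant C independent of b, c, t. -/

import Mathlib

open Real MeasureTheory Set

lemma E1_le {s α : ℝ} (hs : 0 < s) (hα : 0 < α) (_hα1 : α < 1) :
    ∫ x in Set.Ioi s, Real.exp (-x) / x ≤ s ^ (-α) * Real.Gamma α := by
  have hGi : IntegrableOn (fun x : ℝ => Real.exp (-x) * x ^ (α - 1)) (Set.Ioi 0) :=
    Real.GammaIntegral_convergent hα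
  have hGis : IntegrableOn (fun x : ℝ => Real.exp (-x) * x ^ (α - 1)) (Set.Ioi s) :=
    hGi.mono_set (Set.Ioi_subset_Ioi hs.le)
  have step1 : ∫ x in Set.Ioi s, Real.exp (-x) / x
      ≤ ∫ x in Set.Ioi s, s ^ (-α) * (Real.exp (-x) * x ^ (α - 1)) := by
    apply integral_mono_of_nonneg
    · filter_upwards [ae_restrict_mem measurableSet_Ioi] with x hx
      have hx0 : 0 < x := hs.trans hx
      positivity
    · exact hGis.const_mul _
    · filter_upwards [ae_restrict_mem measurableSet_Ioi] with x hx
      have hx0 : 0 < x := hs.trans hx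
      have h1 : x⁻¹ = x ^ (-α) * x ^ (α - 1) := by
        rw [← Real.rpow_add hx0, show -α + (α - 1) = -1 by ring, Real.rpow_neg_one]
      have h2 : x ^ (-α) ≤ s ^ (-α) :=
        Real.rpow_le_rpow_of_nonpos hs (le_of_lt hx) (by linarith)
      calc Real.exp (-x) / x = Real.exp (-x) * (x ^ (-α) * x ^ (α - 1)) := by
            rw [← h1, div_eq_mul_inv]
        _ ≤ Real.exp (-x) * (s ^ (-α) * x ^ (α - 1)) := by
            apply mul_le_mul_of_nonneg_left _ (Real.exp_nonneg _)
            exact mul_le_mul_of_nonneg_right h2 (Real.rpow_nonneg hx0.le _)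
        _ = s ^ (-α) * (Real.exp (-x) * x ^ (α - 1)) := by ring
  have step2 : ∫ x in Set.Ioi s, s ^ (-α) * (Real.exp (-x) * x ^ (α - 1))
      ≤ s ^ (-α) * Real.Gamma α := by
    rw [integral_const_mul, Real.Gamma_eq_integral hα]
    apply mul_le_mul_of_nonneg_left _ (Real.rpow_nonneg hs.le _)
    apply setIntegral_mono_set hGi
    · filter_upwards [ae_restrict_mem measurableSet_Ioi] with x hx
      have hx0 : 0 < x := hx
      positivity
    · exact HasSubset.Subset.eventuallyLE (Set.Ioi_subset_Ioi hs.le)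
  exact step1.trans step2

theorem exponential_integral_double_bound :
    ∃ C : ℝ, 0 < C ∧ ∀ b c t : ℝ, 0 < b → b ≤ π → 0 < c → 0 < t →
      (∫ y in (0 : ℝ)..b, ∫ x in Set.Ioi (c * y ^ 2 * t), Real.exp (-x) / x)
        ≤ C * (1 + c ^ (-(2 / 3) : ℝ)) * t ^ (-(1 / 2) : ℝ) := by
  have hG1 : 0 < Real.Gamma (1/3) := Real.Gamma_pos_of_pos (by norm_num)
  have hG2 : 0 < Real.Gamma (2/3) := Real.Gamma_pos_of_pos (by norm_num)
  refine ⟨6 * (Real.Gamma (1/3) + Real.Gamma (2/3)), by positivity, ?_⟩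
  intro b c t hb _hbpi hc ht
  set F : ℝ → ℝ := fun y => ∫ x in Set.Ioi (c * y ^ 2 * t), Real.exp (-x) / x with hF
  set u : ℝ := t ^ (-(1/2) : ℝ) with hu
  have hu0 : 0 < u := Real.rpow_pos_of_pos ht _
  have hc23 : 0 < c ^ (-(2/3) : ℝ) := Real.rpow_pos_of_pos hc _
  have hRHSpos : 0 < 6 * (Real.Gamma (1/3) + Real.Gamma (2/3)) * (1 + c ^ (-(2/3) : ℝ))
      * t ^ (-(1/2) : ℝ) := by positivity
  rw [intervalIntegral.integral_of_le hb.le]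
  by_cases hFi : IntegrableOn F (Set.Ioc 0 b) volume
  swap
  · rw [integral_undef hFi]
    exact hRHSpos.le
  set A : ℝ := Real.Gamma (1/3) * (c * t) ^ (-(1/3) : ℝ) with hA
  set B : ℝ := Real.Gamma (2/3) * (c * t) ^ (-(2/3) : ℝ) with hB
  have hct : 0 < c * t := mul_pos hc ht
  have hA0 : 0 < A := by positivity
  have hB0 : 0 < B := by positivity
  set h : ℝ → ℝ := fun y => if y ≤ u then A * y ^ (-(2/3) : ℝ) else B * y ^ (-(4/3) : ℝ)
    with hh
  -- rewrite c * y ^ 2 * t powers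
  have key : ∀ y : ℝ, 0 < y →
      (c * y ^ 2 * t) ^ (-(1/3) : ℝ) = (c * t) ^ (-(1/3) : ℝ) * y ^ (-(2/3) : ℝ) ∧
      (c * y ^ 2 * t) ^ (-(2/3) : ℝ) = (c * t) ^ (-(2/3) : ℝ) * y ^ (-(4/3) : ℝ) := by
    intro y hy
    have h2 : c * y ^ 2 * t = (c * t) * y ^ (2 : ℝ) := by
      rw [Real.rpow_two]; ring
    constructor
    · rw [h2, Real.mul_rpow hct.le (Real.rpow_nonneg hy.le _), ← Real.rpow_mul hy.le]
      norm_num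
    · rw [h2, Real.mul_rpow hct.le (Real.rpow_nonneg hy.le _), ← Real.rpow_mul hy.le]
      norm_num
  have hFh : ∀ y ∈ Set.Ioc (0:ℝ) b, F y ≤ h y := by
    intro y hy
    have hy0 : 0 < y := hy.1
    have hs0 : 0 < c * y ^ 2 * t := by positivity
    by_cases hyu : y ≤ u
    · have := E1_le hs0 (show (0:ℝ) < 1/3 by norm_num) (by norm_num)
      simp only [hh, hF, if_pos hyu]
      calc (∫ x in Set.Ioi (c * y ^ 2 * t), Real.exp (-x) / x)
          ≤ (c * y ^ 2 * t) ^ (-(1/3) : ℝ) * Real.Gamma (1/3) := this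
        _ = A * y ^ (-(2/3) : ℝ) := by
            rw [(key y hy0).1, hA]; ring
    · have := E1_le hs0 (show (0:ℝ) < 2/3 by norm_num) (by norm_num)
      simp only [hh, hF, if_neg hyu]
      calc (∫ x in Set.Ioi (c * y ^ 2 * t), Real.exp (-x) / x)
          ≤ (c * y ^ 2 * t) ^ (-(2/3) : ℝ) * Real.Gamma (2/3) := this
        _ = B * y ^ (-(4/3) : ℝ) := by
            rw [(key y hy0).2, hB]; ring
  -- integrability of the two pieces
  have hint1 : IntegrableOn (fun y : ℝ => A * y ^ (-(2/3) : ℝ)) (Set.Ioc 0 u) := by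
    have := intervalIntegral.intervalIntegrable_rpow' (a := 0) (b := u)
      (show (-1 : ℝ) < -(2/3) by norm_num)
    rw [intervalIntegrable_iff_integrableOn_Ioc_of_le hu0.le] at this
    exact this.const_mul A
  have hint2 : IntegrableOn (fun y : ℝ => B * y ^ (-(4/3) : ℝ)) (Set.Ioi u) := by
    exact (integrableOn_Ioi_rpow_of_lt (by norm_num) hu0).const_mul B
  have hset : Set.Ioc (0:ℝ) b = (Set.Ioc 0 b ∩ Set.Iic u) ∪ (Set.Ioc 0 b ∩ Set.Ioi u) := by
    rw [← Set.inter_union_distrib_left, Set.Iic_union_Ioi, Set.inter_univ]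
  have hs1 : Set.Ioc 0 b ∩ Set.Iic u ⊆ Set.Ioc (0:ℝ) u := fun y hy => ⟨hy.1.1, hy.2⟩
  have hs2 : Set.Ioc 0 b ∩ Set.Ioi u ⊆ Set.Ioi u := fun y hy => hy.2
  have hh1 : ∀ y ∈ Set.Ioc 0 b ∩ Set.Iic u, h y = A * y ^ (-(2/3) : ℝ) := by
    intro y hy
    have hyu : y ≤ u := hy.2
    simp only [hh, if_pos hyu]
  have hh2 : ∀ y ∈ Set.Ioc 0 b ∩ Set.Ioi u, h y = B * y ^ (-(4/3) : ℝ) := by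
    intro y hy
    have hyu : ¬ y ≤ u := not_le.mpr hy.2
    simp only [hh, if_neg hyu]
  have hms1 : MeasurableSet (Set.Ioc (0:ℝ) b ∩ Set.Iic u) :=
    measurableSet_Ioc.inter measurableSet_Iic
  have hms2 : MeasurableSet (Set.Ioc (0:ℝ) b ∩ Set.Ioi u) :=
    measurableSet_Ioc.inter measurableSet_Ioi
  have hhi1 : IntegrableOn h (Set.Ioc 0 b ∩ Set.Iic u) :=
    (IntegrableOn.congr_fun (hint1.mono_set hs1) (fun y hy => (hh1 y hy).symm) hms1)
  have hhi2 : IntegrableOn h (Set.Ioc 0 b ∩ Set.Ioi u) :=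
    (IntegrableOn.congr_fun (hint2.mono_set hs2) (fun y hy => (hh2 y hy).symm) hms2)
  have hhi : IntegrableOn h (Set.Ioc 0 b) := by
    rw [hset]; exact hhi1.union hhi2
  have step1 : ∫ y in Set.Ioc 0 b, F y ≤ ∫ y in Set.Ioc 0 b, h y :=
    setIntegral_mono_on hFi hhi measurableSet_Ioc hFh
  -- split the integral of h
  have hdisj : Disjoint (Set.Ioc (0:ℝ) b ∩ Set.Iic u) (Set.Ioc 0 b ∩ Set.Ioi u) := by
    apply Set.disjoint_left.mpr
    rintro y ⟨_, h1⟩ ⟨_, h2⟩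
    exact absurd (a := y ≤ u) h1 (not_le.mpr h2)
  have step2 : ∫ y in Set.Ioc 0 b, h y
      = (∫ y in Set.Ioc 0 b ∩ Set.Iic u, h y) + ∫ y in Set.Ioc 0 b ∩ Set.Ioi u, h y := by
    have := setIntegral_union hdisj hms2 hhi1 hhi2
    rwa [← hset] at this
  have nn1 : 0 ≤ᵐ[volume.restrict (Set.Ioc (0:ℝ) u)] fun y => A * y ^ (-(2/3) : ℝ) := by
    filter_upwards [ae_restrict_mem measurableSet_Ioc] with y hy
    have := hy.1
    positivity
  have nn2 : 0 ≤ᵐ[volume.restrict (Set.Ioi u)] fun y => B * y ^ (-(4/3) : ℝ) := by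
    filter_upwards [ae_restrict_mem measurableSet_Ioi] with y hy
    have : 0 < y := hu0.trans hy
    positivity
  have step3 : (∫ y in Set.Ioc 0 b ∩ Set.Iic u, h y)
      ≤ ∫ y in Set.Ioc (0:ℝ) u, A * y ^ (-(2/3) : ℝ) := by
    rw [setIntegral_congr_fun hms1 hh1]
    exact setIntegral_mono_set hint1 nn1 (HasSubset.Subset.eventuallyLE hs1)
  have step4 : (∫ y in Set.Ioc 0 b ∩ Set.Ioi u, h y)
      ≤ ∫ y in Set.Ioi u, B * y ^ (-(4/3) : ℝ) := by
    rw [setIntegral_congr_fun hms2 hh2]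
    exact setIntegral_mono_set hint2 nn2 (HasSubset.Subset.eventuallyLE hs2)
  -- compute the two integrals
  have calc1 : (∫ y in Set.Ioc (0:ℝ) u, A * y ^ (-(2/3) : ℝ)) = A * (3 * u ^ ((1:ℝ)/3)) := by
    rw [MeasureTheory.integral_const_mul, ← intervalIntegral.integral_of_le hu0.le,
      integral_rpow (Or.inl (by norm_num : (-1:ℝ) < -(2/3))),
      show (-(2/3:ℝ) + 1) = 1/3 by norm_num, Real.zero_rpow (by norm_num)]
    ring
  have calc2 : (∫ y in Set.Ioi u, B * y ^ (-(4/3) : ℝ)) = B * (3 * u ^ (-(1:ℝ)/3)) := by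
    rw [MeasureTheory.integral_const_mul, integral_Ioi_rpow_of_lt (by norm_num) hu0,
      show (-(4/3:ℝ) + 1) = -1/3 by norm_num]
    ring
  -- final arithmetic
  have hu13 : u ^ ((1:ℝ)/3) = t ^ (-(1/6) : ℝ) := by
    rw [hu, ← Real.rpow_mul ht.le]; norm_num
  have hu13' : u ^ (-(1:ℝ)/3) = t ^ ((1/6) : ℝ) := by
    rw [hu, ← Real.rpow_mul ht.le]; norm_num
  have hctA : (c * t) ^ (-(1/3) : ℝ) = c ^ (-(1/3) : ℝ) * t ^ (-(1/3) : ℝ) :=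
    Real.mul_rpow hc.le ht.le
  have hctB : (c * t) ^ (-(2/3) : ℝ) = c ^ (-(2/3) : ℝ) * t ^ (-(2/3) : ℝ) :=
    Real.mul_rpow hc.le ht.le
  have htA : t ^ (-(1/3) : ℝ) * t ^ (-(1/6) : ℝ) = t ^ (-(1/2) : ℝ) := by
    rw [← Real.rpow_add ht]; norm_num
  have htB : t ^ (-(2/3) : ℝ) * t ^ ((1/6) : ℝ) = t ^ (-(1/2) : ℝ) := by
    rw [← Real.rpow_add ht]; norm_num
  have hc13 : c ^ (-(1/3) : ℝ) ≤ 1 + c ^ (-(2/3) : ℝ) := by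
    rcases le_or_gt 1 c with h1 | h1
    · have : c ^ (-(1/3) : ℝ) ≤ c ^ (0 : ℝ) :=
        Real.rpow_le_rpow_of_exponent_le h1 (by norm_num)
      rw [Real.rpow_zero] at this
      linarith
    · have : c ^ (-(1/3) : ℝ) ≤ c ^ (-(2/3) : ℝ) :=
        Real.rpow_le_rpow_of_exponent_ge hc h1.le (by norm_num)
      linarith
  have hc23' : c ^ (-(2/3) : ℝ) ≤ 1 + c ^ (-(2/3) : ℝ) := by linarith
  have htpos : 0 < t ^ (-(1/2) : ℝ) := Real.rpow_pos_of_pos ht _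
  calc ∫ y in Set.Ioc 0 b, F y ≤ _ := step1
    _ = _ := step2
    _ ≤ (∫ y in Set.Ioc (0:ℝ) u, A * y ^ (-(2/3) : ℝ))
        + ∫ y in Set.Ioi u, B * y ^ (-(4/3) : ℝ) := add_le_add step3 step4
    _ = A * (3 * u ^ ((1:ℝ)/3)) + B * (3 * u ^ (-(1:ℝ)/3)) := by rw [calc1, calc2]
    _ = 3 * Real.Gamma (1/3) * (c ^ (-(1/3) : ℝ)) * t ^ (-(1/2) : ℝ)
        + 3 * Real.Gamma (2/3) * (c ^ (-(2/3) : ℝ)) * t ^ (-(1/2) : ℝ) := by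
        rw [hA, hB, hu13, hu13', hctA, hctB]
        rw [show Real.Gamma (1/3) * (c ^ (-(1/3):ℝ) * t ^ (-(1/3):ℝ)) * (3 * t ^ (-(1/6):ℝ))
            = 3 * Real.Gamma (1/3) * c ^ (-(1/3):ℝ)
              * (t ^ (-(1/3):ℝ) * t ^ (-(1/6):ℝ)) by ring,
          show Real.Gamma (2/3) * (c ^ (-(2/3):ℝ) * t ^ (-(2/3):ℝ)) * (3 * t ^ ((1/6):ℝ))
            = 3 * Real.Gamma (2/3) * c ^ (-(2/3):ℝ)
              * (t ^ (-(2/3):ℝ) * t ^ ((1/6):ℝ)) by ring, htA, htB]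
    _ ≤ 3 * Real.Gamma (1/3) * (1 + c ^ (-(2/3) : ℝ)) * t ^ (-(1/2) : ℝ)
        + 3 * Real.Gamma (2/3) * (1 + c ^ (-(2/3) : ℝ)) * t ^ (-(1/2) : ℝ) := by
        apply add_le_add
        · apply mul_le_mul_of_nonneg_right _ htpos.le
          apply mul_le_mul_of_nonneg_left hc13 (by positivity)
        · apply mul_le_mul_of_nonneg_right _ htpos.le
          apply mul_le_mul_of_nonneg_left hc23' (by positivity)
    _ ≤ 6 * (Real.Gamma (1/3) + Real.Gamma (2/3)) * (1 + c ^ (-(2/3) : ℝ))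
        * t ^ (-(1/2) : ℝ) := by
        have hnn : (0:ℝ) ≤ 3 * (Real.Gamma (1/3) + Real.Gamma (2/3))
            * ((1 + c ^ (-(2/3) : ℝ)) * t ^ (-(1/2) : ℝ)) := by positivity
        nlinarith [hnn]
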